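/- The subgroup of Aff(Z/64Z) generated by γ₁(c) = −c + 43 and γ₂(c) = 13·c + 30 is abelian of order 64, isomorphic to Z/32Z × Z/2Z, and acts regularly on Z/64Z. -/
import Mathlib


/-- The affine permutation `c ↦ 13·c + 30` of `ZMod 64` (inverse `c ↦ 5·(c − 30)`,
since `13 · 5 ≡ 1 (mod 64)`). -/
def gammaTwo : Equiv.Perm (ZMod 64) where
  toFun c := 13 * c + 30
  invFun c := 5 * (c - 30)
  left_inv := by decide
  right_inv := by decide

/-- The affine permutation `c ↦ −c + 43` of `ZMod 64`. -/
def gammaOne : Equiv.Perm (ZMod 64) where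
  toFun c := -c + 43
  invFun c := 43 - c
  left_inv := by decide
  right_inv := by decide

set_option maxRecDepth 10000

private lemma hc : Commute gammaTwo gammaOne := by
  show gammaTwo * gammaOne = gammaOne * gammaTwo; decide
private lemma h32 : gammaTwo ^ 32 = 1 := by decide
private lemma h2 : gammaOne ^ 2 = 1 := by decide

/-- The homomorphism `(a,b) ↦ γ₂^a γ₁^b`. -/
private def phi : Multiplicative (ZMod 32) × Multiplicative (ZMod 2) →* Equiv.Perm (ZMod 64) :=
  MonoidHom.mk' (fun p => gammaTwo ^ (p.1.toAdd.val) * gammaOne ^ (p.2.toAdd.val)) (by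
    intro p q
    have e1 : gammaTwo ^ ((p.1.toAdd + q.1.toAdd).val)
        = gammaTwo ^ (p.1.toAdd.val + q.1.toAdd.val) := by
      rw [ZMod.val_add, ← pow_eq_pow_mod _ h32]
    have e2 : gammaOne ^ ((p.2.toAdd + q.2.toAdd).val)
        = gammaOne ^ (p.2.toAdd.val + q.2.toAdd.val) := by
      rw [ZMod.val_add, ← pow_eq_pow_mod _ h2]
    show gammaTwo ^ ((p.1.toAdd + q.1.toAdd).val) * gammaOne ^ ((p.2.toAdd + q.2.toAdd).val) = _
    rw [e1, e2, pow_add, pow_add]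
    exact (Commute.mul_mul_mul_comm (hc.pow_pow _ _) _ _))

private lemma eval0_inj : Function.Injective (fun p => (phi p : Equiv.Perm (ZMod 64)) 0) := by
  decide

private lemma eval0_surj : Function.Surjective (fun p => (phi p : Equiv.Perm (ZMod 64)) 0) := by
  exact ((Fintype.bijective_iff_injective_and_card _).mpr ⟨eval0_inj, by simp⟩).2

private lemma phi_inj : Function.Injective phi := fun p q h => eval0_inj (by simp [h])

private lemma phi_range : phi.range = Subgroup.closure {gammaOne, gammaTwo} := by
  apply le_antisymm
  · rintro f ⟨p, rfl⟩
    have h1 : gammaOne ∈ Subgroup.closure {gammaOne, gammaTwo} :=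
      Subgroup.subset_closure (by simp)
    have h2' : gammaTwo ∈ Subgroup.closure {gammaOne, gammaTwo} :=
      Subgroup.subset_closure (by simp)
    exact mul_mem (pow_mem h2' _) (pow_mem h1 _)
  · rw [Subgroup.closure_le]
    rintro f (rfl | rfl)
    · exact ⟨(1, Multiplicative.ofAdd 1), by decide⟩
    · exact ⟨(Multiplicative.ofAdd 1, 1), by decide⟩

theorem subgroup_gamma_structure :
    (∀ f ∈ Subgroup.closure {gammaOne, gammaTwo},
      ∀ g ∈ Subgroup.closure {gammaOne, gammaTwo}, f * g = g * f) ∧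
    Nat.card (Subgroup.closure {gammaOne, gammaTwo}) = 64 ∧
    Nonempty ((Subgroup.closure {gammaOne, gammaTwo}) ≃*
      Multiplicative (ZMod 32) × Multiplicative (ZMod 2)) ∧
    (∀ x y : ZMod 64, ∃! f : (Subgroup.closure {gammaOne, gammaTwo} : Subgroup (Equiv.Perm (ZMod 64))),
      (f : Equiv.Perm (ZMod 64)) x = y) := by
  refine ⟨?_, ?_, ?_, ?_⟩
  · intro f hf g hg
    rw [← phi_range] at hf hg
    obtain ⟨p, rfl⟩ := hf
    obtain ⟨q, rfl⟩ := hg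
    rw [← map_mul, ← map_mul, mul_comm]
  · rw [← phi_range]
    have : Nat.card phi.range = Nat.card (Multiplicative (ZMod 32) × Multiplicative (ZMod 2)) :=
      Nat.card_congr (MonoidHom.ofInjective phi_inj).toEquiv.symm
    rw [this]
    simp [Nat.card_eq_fintype_card]
  · exact ⟨((MulEquiv.subgroupCongr phi_range.symm).trans (MonoidHom.ofInjective phi_inj).symm)⟩
  · intro x y
    obtain ⟨q, hq⟩ := eval0_surj x
    obtain ⟨r, hr⟩ := eval0_surj y
    simp only at hq hr
    refine ⟨⟨phi (r * q⁻¹), by rw [← phi_range]; exact ⟨_, rfl⟩⟩, ?_, ?_⟩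
    · show (phi (r * q⁻¹)) x = y
      have hinvx : (phi q⁻¹) x = 0 := by
        rw [map_inv, ← hq]
        exact (phi q).symm_apply_apply 0
      rw [map_mul, Equiv.Perm.mul_apply, hinvx, hr]
    · rintro ⟨f, hf⟩ hfx
      rw [← phi_range] at hf
      obtain ⟨p, rfl⟩ := hf
      have hpq : p * q = r := eval0_inj (by
        show (phi (p * q)) 0 = (phi r) 0
        simp only [map_mul, Equiv.Perm.mul_apply, hq, hr]
        exact hfx)
      have : p = r * q⁻¹ := eq_mul_inv_of_mul_eq hpq
      simp [this]
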